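/- There exists a constant C > 0 such that for every λ ∈ ℂ \ σ(K₀), the operator λI − K is bijective with bounded inverse, and for every g ∈ H, ‖(λI − K)^{-1} g‖ ≤ C · ‖g‖ / dist(λ, σ(K₀)). -/

import Mathlib

open scoped ComplexInnerProductSpace


lemma aux_resolvent_norm {H : Type*} [NormedAddCommGroup H] [InnerProductSpace ℂ H]
    [CompleteSpace H] [Nontrivial H] (K₀ : H →L[ℂ] H) (hK₀sa : IsSelfAdjoint K₀)
    {lam : ℂ} (h : IsUnit (algebraMap ℂ (H →L[ℂ] H) lam - K₀)) :
    ‖((h.unit⁻¹ : (H →L[ℂ] H)ˣ) : H →L[ℂ] H)‖ ≤ 1 / Metric.infDist lam (spectrum ℂ K₀) := by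
  set a  : H →L[ℂ] H := algebraMap ℂ (H →L[ℂ] H) lam - K₀ with ha
  have hlam : lam ∉ spectrum ℂ K₀ := spectrum.notMem_iff.mpr h
  have hd : 0 < Metric.infDist lam (spectrum ℂ K₀) :=
    (((spectrum.isClosed K₀).notMem_iff_infDist_pos (spectrum.nonempty K₀)).mp hlam)
  set d := Metric.infDist lam (spectrum ℂ K₀) with hdd
  have hcomm : ∀ μ ν : ℂ, Commute (algebraMap ℂ (H →L[ℂ] H) μ - K₀) (algebraMap ℂ (H →L[ℂ] H) ν - K₀) := by
    intro μ ν
    exact (Algebra.commute_algebraMap_left _ _).sub_left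
      (((Algebra.commute_algebraMap_left ν K₀).symm).sub_right (Commute.refl K₀))
  have hstar : star a = algebraMap ℂ (H →L[ℂ] H) (star lam) - K₀ := by
    rw [ha, star_sub, hK₀sa.star_eq, algebraMap_star_comm]
  haveI hsn : IsStarNormal a := ⟨by rw [hstar]; exact hcomm _ _⟩
  have hUval : (h.unit : (H →L[ℂ] H)) = a := h.unit_spec
  have hcu : Commute ((h.unit : (H →L[ℂ] H)ˣ) : (H →L[ℂ] H)) (star ((h.unit : (H →L[ℂ] H)ˣ) : (H →L[ℂ] H))) := by
    rw [hUval]; exact hsn.star_comm_self.symm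
  have hcstar : Commute ((star h.unit : (H →L[ℂ] H)ˣ) : (H →L[ℂ] H)) ((h.unit : (H →L[ℂ] H)ˣ) : (H →L[ℂ] H)) := by
    rw [Units.coe_star]; exact hcu.symm
  have hc2 : Commute ((star h.unit)⁻¹ : (H →L[ℂ] H)ˣ).val ((h.unit⁻¹ : (H →L[ℂ] H)ˣ) : (H →L[ℂ] H)) :=
    (hcstar.units_inv_left).units_inv_right
  haveI : IsStarNormal ((h.unit⁻¹ : (H →L[ℂ] H)ˣ) : (H →L[ℂ] H)) := by
    constructor
    rw [← Units.coe_star_inv]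
    exact hc2
  have hrad : spectralRadius ℂ ((h.unit⁻¹ : (H →L[ℂ] H)ˣ) : (H →L[ℂ] H)) = ‖((h.unit⁻¹ : (H →L[ℂ] H)ˣ) : (H →L[ℂ] H))‖₊ :=
    IsStarNormal.spectralRadius_eq_nnnorm _
  have hbound : spectralRadius ℂ ((h.unit⁻¹ : (H →L[ℂ] H)ˣ) : (H →L[ℂ] H)) ≤ ENNReal.ofReal (1 / d) := by
    rw [spectralRadius]
    refine iSup₂_le fun μ hμ => ?_
    rw [← ENNReal.ofReal_coe_nnreal, coe_nnnorm]
    refine ENNReal.ofReal_le_ofReal ?_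
    rcases eq_or_ne μ 0 with rfl | hμ0
    · simp
      positivity
    · have hmem : ((Units.mk0 μ hμ0 : ℂˣ) : ℂ) ∈ spectrum ℂ ((h.unit⁻¹ : (H →L[ℂ] H)ˣ) : (H →L[ℂ] H)) := hμ
      have hinv : ((Units.mk0 μ hμ0)⁻¹ : ℂˣ).val ∈ spectrum ℂ ((h.unit⁻¹ : (H →L[ℂ] H)ˣ)⁻¹ : (H →L[ℂ] H)ˣ).val :=
        spectrum.inv_mem_iff.mp hmem
      rw [inv_inv] at hinv
      have hinv' : μ⁻¹ ∈ spectrum ℂ a := by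
        rw [hUval] at hinv
        simpa using hinv
      rw [ha, ← spectrum.singleton_sub_eq] at hinv'
      obtain ⟨x, hx, y, hy, hxy⟩ := Set.mem_sub.mp hinv'
      rw [Set.mem_singleton_iff] at hx
      subst hx
      have hdy : d ≤ ‖μ‖⁻¹ := by
        have h1 := Metric.infDist_le_dist_of_mem (x := x) hy
        rw [dist_eq_norm, hxy, norm_inv] at h1
        exact h1
      have hμpos : 0 < ‖μ‖ := norm_pos_iff.mpr hμ0
      rw [le_div_iff₀ hd]
      have := mul_le_mul_of_nonneg_right hdy (le_of_lt hμpos)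
      rw [inv_mul_cancel₀ (ne_of_gt hμpos)] at this
      linarith [this, mul_comm d ‖μ‖]
  rw [hrad] at hbound
  rw [← ENNReal.ofReal_coe_nnreal, coe_nnnorm] at hbound
  exact (ENNReal.ofReal_le_ofReal_iff (by positivity)).mp hbound


lemma aux_exists_preimage {H : Type*} [NormedAddCommGroup H] [InnerProductSpace ℂ H]
    [CompleteSpace H] (K₀ : H →L[ℂ] H) (hc : IsCompactOperator (⇑K₀))
    (hK₀sa : IsSelfAdjoint K₀) (u : H)
    (hu : ∀ ψ : H, K₀ ψ = (1 / 2 : ℂ) • ψ → ⟪u, ψ⟫ = 0) :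
    ∃ v : H, K₀ v - (1 / 2 : ℂ) • v = u := by
  set A : H →L[ℂ] H := K₀ - (1 / 2 : ℂ) • 1 with hA
  have hAapp : ∀ x : H, A x = K₀ x - (1 / 2 : ℂ) • x := by
    intro x; simp [hA, ContinuousLinearMap.sub_apply]
  have hK₀inner : ∀ x y : H, ⟪K₀ x, y⟫ = ⟪x, K₀ y⟫ := by
    intro x y
    have hadj : ContinuousLinearMap.adjoint K₀ = K₀ :=
      ContinuousLinearMap.isSelfAdjoint_iff'.mp hK₀sa
    conv_lhs => rw [← hadj]
    exact ContinuousLinearMap.adjoint_inner_left K₀ y x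
  have hAinner : ∀ x y : H, ⟪A x, y⟫ = ⟪x, A y⟫ := by
    intro x y
    have h2 : (starRingEnd ℂ) (1 / 2 : ℂ) = (1 / 2 : ℂ) := by
      rw [map_div₀, map_one, Complex.conj_ofNat]
    rw [hAapp, hAapp, inner_sub_left, inner_sub_right, hK₀inner,
      inner_smul_left, inner_smul_right, h2]
  set N : Submodule ℂ H := A.ker with hN
  have hmemN : ∀ x : H, x ∈ N ↔ K₀ x = (1 / 2 : ℂ) • x := by
    intro x
    constructor
    · intro hx
      have h0 : A x = 0 := hx
      rw [hAapp] at h0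
      exact sub_eq_zero.mp h0
    · intro hx
      show A x = 0
      rw [hAapp, hx, sub_self]
  have hNclosed : IsClosed (N : Set H) := ContinuousLinearMap.isClosed_ker A
  -- u ∈ Nᗮ
  have huN : u ∈ Nᗮ := by
    rw [Submodule.mem_orthogonal]
    intro ψ hψ
    have := hu ψ ((hmemN ψ).mp hψ)
    rw [← inner_conj_symm, this, map_zero]
  -- Step 1: bounded below on Nᗮ
  obtain ⟨c, hc0, hbdd⟩ : ∃ c : ℝ, 0 < c ∧ ∀ x ∈ Nᗮ, c * ‖x‖ ≤ ‖A x‖ := by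
    by_contra hcon
    push_neg at hcon
    choose x hxmem hxlt using fun n : ℕ => hcon (1 / (n + 1)) (by positivity)
    have hxne : ∀ n, x n ≠ 0 := by
      intro n h0
      have := hxlt n
      rw [h0, norm_zero, mul_zero, map_zero, norm_zero] at this
      exact lt_irrefl 0 this
    set y : ℕ → H := fun n => ((‖x n‖ : ℂ))⁻¹ • x n with hy
    have hynorm : ∀ n, ‖y n‖ = 1 := by
      intro n
      rw [hy]
      have : ‖x n‖ ≠ 0 := norm_ne_zero_iff.mpr (hxne n)
      simp [norm_smul, this]
    have hymem : ∀ n, y n ∈ Nᗮ := fun n => Submodule.smul_mem _ _ (hxmem n)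
    have hAy : ∀ n, ‖A (y n)‖ < 1 / (n + 1) := by
      intro n
      have hx0 : (0 : ℝ) < ‖x n‖ := norm_pos_iff.mpr (hxne n)
      rw [hy]
      simp only [map_smul, norm_smul]
      rw [norm_inv, Complex.norm_real, norm_norm]
      calc ‖x n‖⁻¹ * ‖A (x n)‖ < ‖x n‖⁻¹ * (1 / (n + 1) * ‖x n‖) := by
            exact mul_lt_mul_of_pos_left (hxlt n) (inv_pos.mpr hx0)
        _ = 1 / (n + 1) := by field_simp
    have hball : ∀ n, K₀ (y n) ∈ closure (⇑K₀ '' Metric.closedBall 0 1) := by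
      intro n
      exact subset_closure ⟨y n, by simp [Metric.mem_closedBall, dist_zero_right, (hynorm n).le], rfl⟩
    obtain ⟨z, hz, φ, hφmono, hφtend⟩ :=
      (hc.isCompact_closure_image_closedBall 1).tendsto_subseq hball
    -- y (φ n) = 2 • (K₀ (y (φ n)) - A (y (φ n)))
    have hyrep : ∀ n, y n = (2 : ℂ) • (K₀ (y n) - A (y n)) := by
      intro n
      rw [hAapp]
      rw [sub_sub_cancel, smul_smul]
      norm_num
    have hAtend : Filter.Tendsto (fun n => A (y (φ n))) Filter.atTop (nhds 0) := by
      rw [tendsto_zero_iff_norm_tendsto_zero]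
      have hupper : ∀ n : ℕ, ‖A (y (φ n))‖ ≤ 1 / (n + 1) := by
        intro n
        refine le_trans (hAy (φ n)).le ?_
        have : n ≤ φ n := hφmono.le_apply
        gcongr
      refine squeeze_zero (fun n => norm_nonneg _) hupper ?_
      exact tendsto_one_div_add_atTop_nhds_zero_nat
    have hytend : Filter.Tendsto (fun n => y (φ n)) Filter.atTop (nhds ((2 : ℂ) • z)) := by
      have := (hφtend.sub hAtend).const_smul (2 : ℂ)
      rw [sub_zero] at this
      convert this using 1
      funext n
      exact hyrep (φ n)
    set w := (2 : ℂ) • z with hw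
    have hwnorm : ‖w‖ = 1 := by
      have := (continuous_norm.tendsto _).comp hytend
      have h1 : Filter.Tendsto (fun n => ‖y (φ n)‖) Filter.atTop (nhds ‖w‖) := this
      have h2 : Filter.Tendsto (fun n => ‖y (φ n)‖) Filter.atTop (nhds 1) := by
        simpa [hynorm] using tendsto_const_nhds (x := (1 : ℝ))
      exact tendsto_nhds_unique h1 h2
    have hwmem : w ∈ Nᗮ := by
      have : IsClosed ((Nᗮ : Submodule ℂ H) : Set H) := Submodule.isClosed_orthogonal N
      exact this.mem_of_tendsto hytend (Filter.Eventually.of_forall fun n => hymem (φ n))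
    have hwker : w ∈ N := by
      have h1 : Filter.Tendsto (fun n => A (y (φ n))) Filter.atTop (nhds (A w)) :=
        (A.continuous.tendsto _).comp hytend
      have : A w = 0 := tendsto_nhds_unique h1 hAtend
      exact this
    have : w = 0 := by
      have h0 : ⟪w, w⟫ = 0 := (Submodule.mem_orthogonal N w).mp hwmem w hwker
      exact inner_self_eq_zero.mp h0
    rw [this, norm_zero] at hwnorm
    norm_num at hwnorm
  -- Step 2: u ∈ closure of range A
  have hrangeorth : (A.range)ᗮ = N := by
    ext z
    rw [Submodule.mem_orthogonal]
    constructor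
    · intro hz
      have h1 : ∀ x : H, ⟪x, A z⟫ = 0 := by
        intro x
        rw [← hAinner]
        exact hz (A x) ⟨x, rfl⟩
      have h2 : A z = 0 := by
        have := h1 (A z)
        exact inner_self_eq_zero.mp this
      exact h2
    · intro hz v hv
      obtain ⟨x, rfl⟩ := hv
      have hz0 : A z = 0 := hz
      rw [ContinuousLinearMap.coe_coe, hAinner, hz0, inner_zero_right]
  have huclos : u ∈ closure ((A.range : Submodule ℂ H) : Set H) := by
    have h1 : (A.range : Submodule ℂ H)ᗮᗮ = (A.range).topologicalClosure :=
      Submodule.orthogonal_orthogonal_eq_closure _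
    have h2 : u ∈ (A.range : Submodule ℂ H)ᗮᗮ := by
      rw [hrangeorth]; exact huN
    rw [h1] at h2
    exact h2
  obtain ⟨g, hgmem, hgtend⟩ := mem_closure_iff_seq_limit.mp huclos
  choose x hx using hgmem
  -- Step 3: project to Nᗮ and use Cauchy
  haveI : CompleteSpace N := hNclosed.completeSpace_coe
  set p : ℕ → H := fun n => x n - (N.orthogonalProjection (x n) : H) with hp
  have hpmem : ∀ n, p n ∈ Nᗮ := fun n => Submodule.sub_starProjection_mem_orthogonal (K := N) (x n)
  have hAp : ∀ n, A (p n) = g n := by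
    intro n
    rw [hp]
    simp only [map_sub]
    have h0 : A ((N.orthogonalProjection (x n) : H)) = 0 :=
      (N.orthogonalProjection (x n)).2
    rw [h0, sub_zero]; exact hx n
  have hgc : CauchySeq g := hgtend.cauchySeq
  have hpc : CauchySeq p := by
    rw [Metric.cauchySeq_iff] at hgc ⊢
    intro ε hε
    obtain ⟨Nn, hNn⟩ := hgc (c * ε) (by positivity)
    refine ⟨Nn, fun m hm n hn => ?_⟩
    have h1 : c * ‖p m - p n‖ ≤ ‖A (p m - p n)‖ :=
      hbdd _ (Submodule.sub_mem _ (hpmem m) (hpmem n))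
    rw [map_sub, hAp, hAp] at h1
    have h2 := hNn m hm n hn
    rw [dist_eq_norm] at h2 ⊢
    nlinarith [norm_nonneg (p m - p n)]
  obtain ⟨v, hv⟩ := cauchySeq_tendsto_of_complete hpc
  refine ⟨v, ?_⟩
  have h1 : Filter.Tendsto (fun n => A (p n)) Filter.atTop (nhds (A v)) :=
    (A.continuous.tendsto _).comp hv
  have h2 : Filter.Tendsto (fun n => A (p n)) Filter.atTop (nhds u) := by
    simpa [hAp] using hgtend
  have := tendsto_nhds_unique h1 h2
  rw [hAapp] at this
  exact this


lemma aux_inner_shift {H : Type*} [NormedAddCommGroup H] [InnerProductSpace ℂ H]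
    [CompleteSpace H] (K₀ : H →L[ℂ] H) (hK₀sa : IsSelfAdjoint K₀) (x y : H) :
    ⟪K₀ x - (1 / 2 : ℂ) • x, y⟫ = ⟪x, K₀ y - (1 / 2 : ℂ) • y⟫ := by
  have hK₀inner : ⟪K₀ x, y⟫ = ⟪x, K₀ y⟫ := by
    have hadj : ContinuousLinearMap.adjoint K₀ = K₀ :=
      ContinuousLinearMap.isSelfAdjoint_iff'.mp hK₀sa
    conv_lhs => rw [← hadj]
    exact ContinuousLinearMap.adjoint_inner_left K₀ y x
  have h2 : (starRingEnd ℂ) (1 / 2 : ℂ) = (1 / 2 : ℂ) := by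
    rw [map_div₀, map_one, Complex.conj_ofNat]
  rw [inner_sub_left, inner_sub_right, hK₀inner, inner_smul_left, inner_smul_right, h2]


/-- Let `H` be an infinite-dimensional complex Hilbert space,
`K₀ : H →L[ℂ] H` a compact self-adjoint operator, `φ₀` a unit vector with
`K₀φ₀ = (1/2)φ₀`, and `u` orthogonal to the eigenspace `ker(K₀ − (1/2)I)`.
Define `Kψ := K₀ψ + ⟪u, ψ⟫ • φ₀`.  Then there is a constant `C > 0` such that for
every `λ ∈ ℂ \ σ(K₀)` the operator `λI − K` is bijective with bounded inverse
(i.e. `λ ∉ σ(K)`), and `‖(λI − K)⁻¹ g‖ ≤ C‖g‖ / dist(λ, σ(K₀))` for all `g ∈ H`. -/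
theorem statement4 {H : Type*} [NormedAddCommGroup H] [InnerProductSpace ℂ H]
    [CompleteSpace H] (hinf : ¬ FiniteDimensional ℂ H)
    (K₀ : H →L[ℂ] H) (hK₀compact : IsCompactOperator (⇑K₀))
    (hK₀sa : IsSelfAdjoint K₀)
    (φ₀ : H) (hφ₀norm : ‖φ₀‖ = 1) (hφ₀eig : K₀ φ₀ = (1 / 2 : ℂ) • φ₀)
    (u : H) (hu : ∀ ψ : H, K₀ ψ = (1 / 2 : ℂ) • ψ → ⟪u, ψ⟫ = 0)
    (K : H →L[ℂ] H) (hK : ∀ ψ : H, K ψ = K₀ ψ + ⟪u, ψ⟫ • φ₀) :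
    ∃ C : ℝ, 0 < C ∧ ∀ lam : ℂ, lam ∉ spectrum ℂ K₀ →
      IsUnit (algebraMap ℂ (H →L[ℂ] H) lam - K) ∧
      ∀ g f : H, lam • f - K f = g →
        ‖f‖ ≤ C * ‖g‖ / Metric.infDist lam (spectrum ℂ K₀) := by
  have hφ₀ne : φ₀ ≠ 0 := by
    intro h; rw [h, norm_zero] at hφ₀norm; norm_num at hφ₀norm
  haveI : Nontrivial H := nontrivial_of_ne φ₀ 0 hφ₀ne
  obtain ⟨v, hv⟩ := aux_exists_preimage K₀ hK₀compact hK₀sa u hu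
  refine ⟨1 + 2 * ‖v‖, by positivity, ?_⟩
  intro lam hlam
  have hunit : IsUnit (algebraMap ℂ (H →L[ℂ] H) lam - K₀) := spectrum.notMem_iff.mp hlam
  set a : H →L[ℂ] H := algebraMap ℂ (H →L[ℂ] H) lam - K₀ with ha
  set R : H →L[ℂ] H := ((hunit.unit⁻¹ : (H →L[ℂ] H)ˣ) : H →L[ℂ] H) with hR
  have haR : a * R = 1 := by
    have h0 := hunit.unit.mul_inv
    rwa [hunit.unit_spec] at h0
  have hRa : R * a = 1 := by
    have h0 := hunit.unit.inv_mul
    rwa [hunit.unit_spec] at h0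
  have haapp : ∀ x : H, a x = lam • x - K₀ x := by
    intro x
    rw [ha]
    simp [Algebra.algebraMap_eq_smul_one, ContinuousLinearMap.sub_apply]
  have haRapp : ∀ x : H, a (R x) = x := by
    intro x
    have := congrArg (fun T : H →L[ℂ] H => T x) haR
    simpa [ContinuousLinearMap.mul_apply] using this
  have hRaapp : ∀ x : H, R (a x) = x := by
    intro x
    have := congrArg (fun T : H →L[ℂ] H => T x) hRa
    simpa [ContinuousLinearMap.mul_apply] using this
  -- 1/2 is in the spectrum of K₀
  have hhalf : (1 / 2 : ℂ) ∈ spectrum ℂ K₀ := by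
    rw [spectrum.mem_iff]
    rintro ⟨U, hUeq⟩
    have h0 : (algebraMap ℂ (H →L[ℂ] H) (1 / 2) - K₀) φ₀ = 0 := by
      simp [Algebra.algebraMap_eq_smul_one, ContinuousLinearMap.sub_apply, hφ₀eig]
    have h2 := congrArg (fun T : H →L[ℂ] H => T φ₀) U.inv_mul
    simp only [ContinuousLinearMap.mul_apply, ContinuousLinearMap.one_apply, hUeq] at h2
    rw [h0, map_zero] at h2
    exact hφ₀ne h2.symm
  have hlamne : lam - 1 / 2 ≠ 0 := sub_ne_zero.mpr (by rintro rfl; exact hlam hhalf)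
  set d := Metric.infDist lam (spectrum ℂ K₀) with hd
  have hdpos : 0 < d :=
    ((spectrum.isClosed K₀).notMem_iff_infDist_pos (spectrum.nonempty K₀)).mp hlam
  have hdle : d ≤ ‖lam - 1 / 2‖ := by
    have := Metric.infDist_le_dist_of_mem (x := lam) hhalf
    rwa [dist_eq_norm] at this
  have hnR : ‖R‖ ≤ 1 / d := aux_resolvent_norm K₀ hK₀sa hunit
  have huφ₀ : ⟪u, φ₀⟫ = 0 := hu φ₀ hφ₀eig
  have haφ₀ : a φ₀ = (lam - 1 / 2) • φ₀ := by
    rw [haapp, hφ₀eig, sub_smul]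
  have hRφ₀ : R φ₀ = (lam - 1 / 2)⁻¹ • φ₀ := by
    have h1 : φ₀ = (lam - 1 / 2) • R φ₀ := by
      conv_lhs => rw [← hRaapp φ₀, haφ₀, map_smul]
    have h2 := congrArg (fun x : H => (lam - 1 / 2)⁻¹ • x) h1
    simp only [smul_smul, inv_mul_cancel₀ hlamne, one_smul] at h2
    exact h2.symm
  set Bop : H →L[ℂ] H :=
    R + ContinuousLinearMap.smulRight ((innerSL ℂ u).comp R) ((lam - 1 / 2)⁻¹ • φ₀) with hB
  have hBapp : ∀ g : H, Bop g = R g + ⟪u, R g⟫ • ((lam - 1 / 2)⁻¹ • φ₀) := by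
    intro g
    rw [hB]
    simp [ContinuousLinearMap.smulRight_apply, ContinuousLinearMap.add_apply]
  set T : H →L[ℂ] H := algebraMap ℂ (H →L[ℂ] H) lam - K with hT
  have hTapp : ∀ x : H, T x = a x - ⟪u, x⟫ • φ₀ := by
    intro x
    rw [hT, ha]
    simp only [ContinuousLinearMap.sub_apply, hK x]
    abel
  have hTB : ∀ g : H, T (Bop g) = g := by
    intro g
    rw [hTapp, hBapp]
    rw [map_add, haRapp, map_smul, map_smul, haφ₀]
    rw [inner_add_right, inner_smul_right, inner_smul_right, huφ₀, inv_smul_smul₀ hlamne]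
    simp only [mul_zero, add_zero]
    abel
  have hBT : ∀ f : H, Bop (T f) = f := by
    intro f
    rw [hBapp, hTapp]
    rw [map_sub, hRaapp, map_smul, hRφ₀]
    rw [inner_sub_right, inner_smul_right, inner_smul_right, huφ₀]
    simp only [mul_zero, sub_zero]
    abel
  have hTBop : T * Bop = 1 := by
    ext g
    simpa [ContinuousLinearMap.mul_apply, ContinuousLinearMap.one_apply] using hTB g
  have hBTop : Bop * T = 1 := by
    ext f
    simpa [ContinuousLinearMap.mul_apply, ContinuousLinearMap.one_apply] using hBT f
  constructor
  · exact ⟨⟨T, Bop, hTBop, hBTop⟩, rfl⟩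
  · intro g f hfg
    have hTf : T f = g := by
      rw [hT]
      simpa [Algebra.algebraMap_eq_smul_one, ContinuousLinearMap.sub_apply] using hfg
    have hf : f = Bop g := by rw [← hTf, hBT]
    have hfval : f = R g + (⟪u, R g⟫ * (lam - 1 / 2)⁻¹) • φ₀ := by
      rw [hf, hBapp, smul_smul]
    -- rewrite the inner product using v
    have hAv : ⟪u, R g⟫ = ⟪v, K₀ (R g) - (1 / 2 : ℂ) • R g⟫ := by
      rw [← hv]
      exact aux_inner_shift K₀ hK₀sa v (R g)
    have hK0Rg : K₀ (R g) = lam • R g - g := by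
      have h1 := haRapp g
      rw [haapp] at h1
      have h2 := sub_eq_iff_eq_add.mp h1
      rw [h2]
      abel
    have hARg : K₀ (R g) - (1 / 2 : ℂ) • R g = (lam - 1 / 2) • R g - g := by
      rw [hK0Rg, sub_smul]
      abel
    have hinner : ⟪u, R g⟫ = (lam - 1 / 2) * ⟪v, R g⟫ - ⟪v, g⟫ := by
      rw [hAv, hARg, inner_sub_right, inner_smul_right]
    -- norm estimates
    have hs0 : (0 : ℝ) < ‖lam - 1 / 2‖ := norm_pos_iff.mpr hlamne
    have hRg : ‖R g‖ ≤ ‖g‖ / d := by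
      calc ‖R g‖ ≤ ‖R‖ * ‖g‖ := R.le_opNorm g
        _ ≤ (1 / d) * ‖g‖ := by gcongr
        _ = ‖g‖ / d := by ring
    have hIn : ‖⟪u, R g⟫‖ ≤ ‖lam - 1 / 2‖ * (‖v‖ * ‖R g‖) + ‖v‖ * ‖g‖ := by
      rw [hinner]
      refine le_trans (norm_sub_le _ _) ?_
      gcongr
      · rw [norm_mul]
        gcongr
        exact norm_inner_le_norm v (R g)
      · exact norm_inner_le_norm v g
    have hfle : ‖f‖ ≤ ‖R g‖ + ‖⟪u, R g⟫‖ * ‖lam - 1 / 2‖⁻¹ := by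
      rw [hfval]
      refine le_trans (norm_add_le _ _) ?_
      rw [norm_smul, norm_mul, norm_inv, hφ₀norm, mul_one]
    have hstep : ‖⟪u, R g⟫‖ * ‖lam - 1 / 2‖⁻¹ ≤ ‖v‖ * ‖R g‖ + ‖v‖ * (‖g‖ / d) := by
      have h1 : ‖⟪u, R g⟫‖ * ‖lam - 1 / 2‖⁻¹ ≤
          (‖lam - 1 / 2‖ * (‖v‖ * ‖R g‖) + ‖v‖ * ‖g‖) * ‖lam - 1 / 2‖⁻¹ := by
        gcongr
      refine le_trans h1 ?_
      rw [add_mul]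
      have h2 : ‖lam - 1 / 2‖ * (‖v‖ * ‖R g‖) * ‖lam - 1 / 2‖⁻¹ = ‖v‖ * ‖R g‖ := by
        rw [mul_comm (‖lam - 1 / 2‖) (‖v‖ * ‖R g‖), mul_assoc,
          mul_inv_cancel₀ (ne_of_gt hs0), mul_one]
      rw [h2]
      rw [mul_assoc, ← div_eq_mul_inv]
      gcongr
    have hvRg : ‖v‖ * ‖R g‖ ≤ ‖v‖ * (‖g‖ / d) :=
      mul_le_mul_of_nonneg_left hRg (norm_nonneg v)
    have hrw : (1 + 2 * ‖v‖) * ‖g‖ / d = ‖g‖ / d + (‖v‖ * (‖g‖ / d) + ‖v‖ * (‖g‖ / d)) := by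
      ring
    rw [hrw]
    linarith
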